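/- (Theorem 1, Stability of ECAA) For every initial matching Φ₀ there exist k ∈ ℕ and a finite sequence Φ₀, Φ₁, …, Φ_k of matchings, where each Φ_{i+1} is the swap matching of Φ_i at some swap-blocking pair of Φ_i, such that the final matching Φ_k is two-sided exchange-stable, i.e., Φ_k admits no swap-blocking pair. -/

import Mathlib

/-- The fiber of a channel `m` under an allocation `Φ`: the set of users assigned to `m`. -/
def fiber {N M : ℕ} (Φ : Fin N → Fin M) (m : Fin M) : Finset (Fin N) :=
  Finset.univ.filter (fun k => Φ k = m)

/-- `Φ` is a matching: every channel serves at most `D` users. -/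
def IsMatching {N M : ℕ} (D : ℕ) (Φ : Fin N → Fin M) : Prop :=
  ∀ m : Fin M, (fiber Φ m).card ≤ D

/-- The swap matching `Φ^{n↔n'}`. -/
def swapMatch {N M : ℕ} (Φ : Fin N → Fin M) (n n' : Fin N) : Fin N → Fin M :=
  fun k => if k = n then Φ n' else if k = n' then Φ n else Φ k

/-- `(n, n')` is a swap-blocking pair for `Φ`. -/
def IsBlockingPair {N M : ℕ} (u : Fin N → Fin M → ℝ) (w : Fin M → Finset (Fin N) → ℝ)
    (Φ : Fin N → Fin M) (n n' : Fin N) : Prop :=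
  Φ n ≠ Φ n' ∧
    (u n (swapMatch Φ n n' n) ≥ u n (Φ n)) ∧
    (u n' (swapMatch Φ n n' n') ≥ u n' (Φ n')) ∧
    (w (Φ n) (fiber (swapMatch Φ n n') (Φ n)) ≥ w (Φ n) (fiber Φ (Φ n))) ∧
    (w (Φ n') (fiber (swapMatch Φ n n') (Φ n')) ≥ w (Φ n') (fiber Φ (Φ n'))) ∧
    ((u n (swapMatch Φ n n' n) > u n (Φ n)) ∨
     (u n' (swapMatch Φ n n' n') > u n' (Φ n')) ∨
     (w (Φ n) (fiber (swapMatch Φ n n') (Φ n)) > w (Φ n) (fiber Φ (Φ n))) ∨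
     (w (Φ n') (fiber (swapMatch Φ n n') (Φ n')) > w (Φ n') (fiber Φ (Φ n'))))

/-- `Φ` is two-sided exchange-stable (2ES): no swap-blocking pair for `Φ` exists. -/
def IsTwoSidedExchangeStable {N M : ℕ} (u : Fin N → Fin M → ℝ)
    (w : Fin M → Finset (Fin N) → ℝ) (Φ : Fin N → Fin M) : Prop :=
  ¬ ∃ n n' : Fin N, IsBlockingPair u w Φ n n'


/-- Total potential: sum of all user and channel utilities. -/
noncomputable def pot {N M : ℕ} (u : Fin N → Fin M → ℝ) (w : Fin M → Finset (Fin N) → ℝ)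
    (Φ : Fin N → Fin M) : ℝ :=
  (∑ k, u k (Φ k)) + (∑ m, w m (fiber Φ m))

lemma swapMatch_apply_other {N M : ℕ} (Φ : Fin N → Fin M) (n n' k : Fin N)
    (h1 : k ≠ n) (h2 : k ≠ n') : swapMatch Φ n n' k = Φ k := by
  simp [swapMatch, h1, h2]

lemma fiber_swap_eq {N M : ℕ} (Φ : Fin N → Fin M) (n n' : Fin N) (m : Fin M)
    (h1 : m ≠ Φ n) (h2 : m ≠ Φ n') : fiber (swapMatch Φ n n') m = fiber Φ m := by
  ext k
  simp only [fiber, Finset.mem_filter, Finset.mem_univ, true_and]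
  simp only [swapMatch]
  split_ifs with hk hk'
  · subst hk
    constructor
    · intro he; exact absurd he.symm h2
    · intro he; exact absurd he.symm h1
  · subst hk'
    constructor
    · intro he; exact absurd he.symm h1
    · intro he; exact absurd he.symm h2
  · rfl

lemma pot_lt_of_blocking {N M : ℕ} (u : Fin N → Fin M → ℝ)
    (w : Fin M → Finset (Fin N) → ℝ) (Φ : Fin N → Fin M) (n n' : Fin N)
    (h : IsBlockingPair u w Φ n n') :
    pot u w Φ < pot u w (swapMatch Φ n n') := by
  obtain ⟨hne, h1, h2, h3, h4, hstrict⟩ := h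
  set Φ' := swapMatch Φ n n' with hΦ'
  have hnn' : n ≠ n' := fun h => hne (by rw [h])
  have hun : Φ' n = Φ n' := by simp [hΦ', swapMatch]
  have hun' : Φ' n' = Φ n := by simp [hΦ', swapMatch, hnn'.symm]
  have hu : ∀ k, 0 ≤ u k (Φ' k) - u k (Φ k) := by
    intro k
    by_cases hk : k = n
    · subst hk; linarith
    · by_cases hk' : k = n'
      · subst hk'; linarith
      · rw [hΦ', swapMatch_apply_other Φ n n' k hk hk']; simp
  have hw : ∀ m, 0 ≤ w m (fiber Φ' m) - w m (fiber Φ m) := by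
    intro m
    by_cases hm : m = Φ n
    · subst hm; linarith
    · by_cases hm' : m = Φ n'
      · subst hm'; linarith
      · rw [hΦ', fiber_swap_eq Φ n n' m hm hm']; simp
  have hsum1 : 0 ≤ ∑ k, (u k (Φ' k) - u k (Φ k)) :=
    Finset.sum_nonneg (fun k _ => hu k)
  have hsum2 : 0 ≤ ∑ m, (w m (fiber Φ' m) - w m (fiber Φ m)) :=
    Finset.sum_nonneg (fun m _ => hw m)
  have key : 0 < (∑ k, (u k (Φ' k) - u k (Φ k))) +
      (∑ m, (w m (fiber Φ' m) - w m (fiber Φ m))) := by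
    rcases hstrict with hs | hs | hs | hs
    · have : 0 < ∑ k, (u k (Φ' k) - u k (Φ k)) :=
        Finset.sum_pos' (fun k _ => hu k) ⟨n, Finset.mem_univ n, by linarith⟩
      linarith
    · have : 0 < ∑ k, (u k (Φ' k) - u k (Φ k)) :=
        Finset.sum_pos' (fun k _ => hu k) ⟨n', Finset.mem_univ n', by linarith⟩
      linarith
    · have : 0 < ∑ m, (w m (fiber Φ' m) - w m (fiber Φ m)) :=
        Finset.sum_pos' (fun m _ => hw m) ⟨Φ n, Finset.mem_univ _, by linarith⟩
      linarith
    · have : 0 < ∑ m, (w m (fiber Φ' m) - w m (fiber Φ m)) :=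
        Finset.sum_pos' (fun m _ => hw m) ⟨Φ n', Finset.mem_univ _, by linarith⟩
      linarith
  rw [Finset.sum_sub_distrib, Finset.sum_sub_distrib] at key
  unfold pot
  linarith

lemma ecaa_aux {N M : ℕ} (u : Fin N → Fin M → ℝ) (w : Fin M → Finset (Fin N) → ℝ) :
    ∀ (c : ℕ) (Φ : Fin N → Fin M),
      Set.ncard {Ψ : Fin N → Fin M | pot u w Φ < pot u w Ψ} ≤ c →
      ∃ (k : ℕ) (Φs : ℕ → (Fin N → Fin M)),
        Φs 0 = Φ ∧
        (∀ i < k, ∃ n n' : Fin N,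
          IsBlockingPair u w (Φs i) n n' ∧ Φs (i + 1) = swapMatch (Φs i) n n') ∧
        IsTwoSidedExchangeStable u w (Φs k) := by
  intro c
  induction c with
  | zero =>
    intro Φ hc
    by_cases hs : IsTwoSidedExchangeStable u w Φ
    · exact ⟨0, fun _ => Φ, rfl, fun i hi => absurd hi (Nat.not_lt_zero i), hs⟩
    · exfalso
      rw [IsTwoSidedExchangeStable, not_not] at hs
      obtain ⟨n, n', hb⟩ := hs
      have hlt := pot_lt_of_blocking u w Φ n n' hb
      have hne : {Ψ : Fin N → Fin M | pot u w Φ < pot u w Ψ}.Nonempty :=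
        ⟨swapMatch Φ n n', hlt⟩
      have := (Set.ncard_pos (Set.toFinite _)).mpr hne
      omega
  | succ c ih =>
    intro Φ hc
    by_cases hs : IsTwoSidedExchangeStable u w Φ
    · exact ⟨0, fun _ => Φ, rfl, fun i hi => absurd hi (Nat.not_lt_zero i), hs⟩
    · rw [IsTwoSidedExchangeStable, not_not] at hs
      obtain ⟨n, n', hb⟩ := hs
      set Φ' := swapMatch Φ n n' with hΦ'
      have hlt := pot_lt_of_blocking u w Φ n n' hb
      have hsub : {Ψ : Fin N → Fin M | pot u w Φ' < pot u w Ψ} ⊂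
          {Ψ : Fin N → Fin M | pot u w Φ < pot u w Ψ} := by
        constructor
        · intro Ψ hΨ; exact lt_trans hlt hΨ
        · intro hsup
          have h2 : pot u w Φ' < pot u w Φ' := hsup hlt
          exact lt_irrefl _ h2
      have hcard : Set.ncard {Ψ : Fin N → Fin M | pot u w Φ' < pot u w Ψ} ≤ c := by
        have := Set.ncard_lt_ncard hsub (Set.toFinite _)
        omega
      obtain ⟨k, Ψs, h0, hstep, hstab⟩ := ih Φ' hcard
      refine ⟨k + 1, fun i => if i = 0 then Φ else Ψs (i - 1), by simp, ?_, ?_⟩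
      · intro i hi
        match i with
        | 0 => exact ⟨n, n', hb, by simp [h0, hΦ']⟩
        | Nat.succ j =>
          obtain ⟨a, b, hb', heq⟩ := hstep j (by omega)
          exact ⟨a, b, by simpa using hb', by simpa using heq⟩
      · simpa using hstab

/-- **Stability of ECAA.** Starting from any initial matching `Φ₀`, there is a finite
sequence of swap operations at swap-blocking pairs whose final matching is two-sided
exchange-stable. -/
theorem ecaa_stability
    (N M D : ℕ) (hN : 1 ≤ N) (hM : 1 ≤ M) (hD : 1 ≤ D)
    (u : Fin N → Fin M → ℝ) (w : Fin M → Finset (Fin N) → ℝ)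
    (Φ₀ : Fin N → Fin M) (hΦ₀ : IsMatching D Φ₀) :
    ∃ (k : ℕ) (Φ : ℕ → (Fin N → Fin M)),
      Φ 0 = Φ₀ ∧
      (∀ i < k, ∃ n n' : Fin N,
        IsBlockingPair u w (Φ i) n n' ∧ Φ (i + 1) = swapMatch (Φ i) n n') ∧
      IsTwoSidedExchangeStable u w (Φ k) := by
  exact ecaa_aux u w _ Φ₀ le_rfl
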